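/- For any probability measure q on {1, 2, ..., ∞} and α < 0, the sequence u_n = Σ_{m=1}^∞ q_m / (m|α|+1)_{n-1↑} (with the m = ∞ term contributing q_∞·1(n=1)-type limit, i.e., interpreted as 0 for n ≥ 2) yields, via the iterated differences V_{n,1} = u_n and V_{n+1,k+1} = V_{n,k} - (n - αk)V_{n+1,k}, a nonnegative array (V_{n,k})_{1≤k≤n}. -/

import Mathlib

open Finset

/-- Rising factorial `(x)_{m↑} = x(x+1)⋯(x+m-1)`. -/
noncomputable def risingFac1 (x : ℝ) (m : ℕ) : ℝ := ∏ i ∈ Finset.range m, (x + i)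

lemma risingFac1_pos {x : ℝ} (hx : 0 < x) (m : ℕ) : 0 < risingFac1 x m := by
  unfold risingFac1
  exact Finset.prod_pos fun i _ => by positivity

/-- Numerator of the weight function. -/
noncomputable def phiN (α : ℝ) (m k : ℕ) : ℝ :=
  ∏ j ∈ Finset.range (k - 1), ((m : ℝ) * |α| + α * (j + 1))

/-- The weight `φ_{n,k}(m)`. -/
noncomputable def phi (α : ℝ) (m n k : ℕ) : ℝ :=
  phiN α m k / risingFac1 ((m : ℝ) * |α| + 1) (n - 1)

/-- The weight for the `m = ∞` component. -/
noncomputable def psi (n k : ℕ) : ℝ := if n = k then 1 else 0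

lemma phiN_nonneg {α : ℝ} (hα : α < 0) {m : ℕ} (hm : 1 ≤ m) (k : ℕ) :
    0 ≤ phiN α m k := by
  have habs : |α| = -α := abs_of_neg hα
  rcases le_or_gt k m with hkm | hkm
  · apply Finset.prod_nonneg
    intro j hj
    have hj' : (j : ℝ) + 1 ≤ m := by
      have : j + 1 ≤ m := by
        have := Finset.mem_range.mp hj; omega
      exact_mod_cast this
    rw [habs]; nlinarith
  · apply le_of_eq
    symm
    apply Finset.prod_eq_zero (i := m - 1) (Finset.mem_range.mpr (by omega))
    have : ((m - 1 : ℕ) : ℝ) + 1 = (m : ℝ) := by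
      push_cast [Nat.cast_sub hm]; ring
    rw [this, habs]; ring

lemma phiN_le {α : ℝ} (hα : α < 0) {m : ℕ} (hm : 1 ≤ m) (k : ℕ) :
    phiN α m k ≤ ∏ j ∈ Finset.range (k - 1), ((m : ℝ) * |α| + 1 + j) := by
  have habs : |α| = -α := abs_of_neg hα
  rcases le_or_gt k m with hkm | hkm
  · apply Finset.prod_le_prod
    · intro j hj
      have hj' : (j : ℝ) + 1 ≤ m := by
        have : j + 1 ≤ m := by
          have := Finset.mem_range.mp hj; omega
        exact_mod_cast this
      rw [habs]; nlinarith
    · intro j hj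
      have hj0 : (0 : ℝ) ≤ j := Nat.cast_nonneg j
      nlinarith
  · have h0 : phiN α m k = 0 := by
      apply Finset.prod_eq_zero (i := m - 1) (Finset.mem_range.mpr (by omega))
      have : ((m - 1 : ℕ) : ℝ) + 1 = (m : ℝ) := by
        push_cast [Nat.cast_sub hm]; ring
      rw [this, habs]; ring
    rw [h0]
    apply Finset.prod_nonneg
    intro j hj
    have hj0 : (0 : ℝ) ≤ j := Nat.cast_nonneg j
    have hm' : (1 : ℝ) ≤ m := by exact_mod_cast hm
    have : 0 < |α| := abs_pos.mpr (ne_of_lt hα)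
    nlinarith

lemma phi_nonneg {α : ℝ} (hα : α < 0) {m : ℕ} (hm : 1 ≤ m) (n k : ℕ) :
    0 ≤ phi α m n k := by
  have hm' : (1 : ℝ) ≤ m := by exact_mod_cast hm
  have hαa : 0 < |α| := abs_pos.mpr (ne_of_lt hα)
  apply div_nonneg (phiN_nonneg hα hm k)
  exact (risingFac1_pos (by nlinarith) _).le

lemma phi_le_one {α : ℝ} (hα : α < 0) {m n k : ℕ} (hm : 1 ≤ m) (hkn : k ≤ n) :
    phi α m n k ≤ 1 := by
  have hm' : (1 : ℝ) ≤ m := by exact_mod_cast hm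
  have hαa : 0 < |α| := abs_pos.mpr (ne_of_lt hα)
  have hx : (0 : ℝ) < (m : ℝ) * |α| + 1 := by nlinarith
  rw [phi, div_le_one (risingFac1_pos hx _)]
  calc phiN α m k ≤ ∏ j ∈ Finset.range (k - 1), ((m : ℝ) * |α| + 1 + j) :=
        phiN_le hα hm k
    _ ≤ ∏ j ∈ Finset.range (n - 1), ((m : ℝ) * |α| + 1 + j) := by
        obtain ⟨d, hd⟩ : ∃ d, n - 1 = (k - 1) + d := ⟨(n - 1) - (k - 1), by omega⟩
        rw [hd, Finset.prod_range_add]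
        have hP : (0 : ℝ) ≤ ∏ j ∈ Finset.range (k - 1), ((m : ℝ) * |α| + 1 + j) := by
          apply Finset.prod_nonneg
          intro j _
          have : (0 : ℝ) ≤ j := Nat.cast_nonneg j
          nlinarith
        apply le_mul_of_one_le_right hP
        calc (1 : ℝ) = ∏ _j ∈ Finset.range d, (1 : ℝ) := by simp
          _ ≤ _ := by
              apply Finset.prod_le_prod (fun i _ => zero_le_one)
              intro i _
              have : (0 : ℝ) ≤ ((k - 1) + i : ℕ) := Nat.cast_nonneg _
              nlinarith
    _ = risingFac1 ((m : ℝ) * |α| + 1) (n - 1) := rfl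

lemma phi_one {α : ℝ} (m n : ℕ) :
    phi α m n 1 = 1 / risingFac1 ((m : ℝ) * |α| + 1) (n - 1) := by
  simp [phi, phiN]

lemma phi_rec {α : ℝ} (hα : α < 0) {m n k : ℕ} (hm : 1 ≤ m) (hn : 1 ≤ n)
    (hk : 1 ≤ k) :
    phi α m (n + 1) (k + 1) = phi α m n k - ((n : ℝ) - α * k) * phi α m (n + 1) k := by
  have hm' : (1 : ℝ) ≤ m := by exact_mod_cast hm
  have hn' : (1 : ℝ) ≤ n := by exact_mod_cast hn
  have hαa : 0 < |α| := abs_pos.mpr (ne_of_lt hα)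
  set c : ℝ := (m : ℝ) * |α| with hc
  have hc0 : 0 < c := by rw [hc]; nlinarith
  have hD : risingFac1 (c + 1) ((n + 1) - 1) =
      risingFac1 (c + 1) (n - 1) * (c + (n : ℝ)) := by
    have h1 : (n + 1) - 1 = (n - 1) + 1 := by omega
    rw [h1]
    unfold risingFac1
    rw [Finset.prod_range_succ]
    congr 1
    have : ((n - 1 : ℕ) : ℝ) = (n : ℝ) - 1 := by
      push_cast [Nat.cast_sub hn]; ring
    rw [this]; ring
  have hN : phiN α m (k + 1) = phiN α m k * (c + α * (k : ℝ)) := by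
    have h1 : (k + 1) - 1 = (k - 1) + 1 := by omega
    unfold phiN
    rw [h1, Finset.prod_range_succ]
    congr 1
    have : ((k - 1 : ℕ) : ℝ) = (k : ℝ) - 1 := by
      push_cast [Nat.cast_sub hk]; ring
    rw [this]; ring
  have hD0 : risingFac1 (c + 1) (n - 1) ≠ 0 :=
    (risingFac1_pos (by nlinarith) _).ne'
  have hcn : c + (n : ℝ) ≠ 0 := by nlinarith
  unfold phi
  rw [hN, hD]
  rw [← hc]
  field_simp
  ring

lemma psi_rec {α : ℝ} {n k : ℕ} (hkn : k ≤ n) :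
    psi (n + 1) (k + 1) = psi n k - ((n : ℝ) - α * k) * psi (n + 1) k := by
  unfold psi
  rw [if_neg (show n + 1 ≠ k by omega)]
  simp [Nat.succ_inj]

theorem stmt_17 (α : ℝ) (hα : α < 0)
    (q : ℕ → ℝ) (qinf : ℝ)
    (hq : ∀ m : ℕ, 1 ≤ m → 0 ≤ q m) (hqinf : 0 ≤ qinf)
    (hsum : Summable (fun m : ℕ => q (m + 1)))
    (htotal : (∑' m : ℕ, q (m + 1)) + qinf = 1)
    (u : ℕ → ℝ)
    (hu : ∀ n : ℕ, 1 ≤ n →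
      u n = (∑' m : ℕ, q (m + 1) / risingFac1 ((m + 1 : ℕ) * |α| + 1) (n - 1)) +
        (if n = 1 then qinf else 0))
    (V : ℕ → ℕ → ℝ)
    (hV1 : ∀ n : ℕ, 1 ≤ n → V n 1 = u n)
    (hVrec : ∀ n k : ℕ, 1 ≤ k → k ≤ n →
      V (n + 1) (k + 1) = V n k - ((n : ℝ) - α * k) * V (n + 1) k) :
    ∀ n k : ℕ, 1 ≤ k → k ≤ n → 0 ≤ V n k := by
  -- summability of the weighted series
  have hsummable : ∀ n k : ℕ, k ≤ n →
      Summable (fun m : ℕ => q (m + 1) * phi α (m + 1) n k) := by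
    intro n k hkn
    apply Summable.of_nonneg_of_le
      (fun m => mul_nonneg (hq (m + 1) (by omega)) (phi_nonneg hα (by omega) n k))
      (fun m => ?_) hsum
    calc q (m + 1) * phi α (m + 1) n k ≤ q (m + 1) * 1 := by
          apply mul_le_mul_of_nonneg_left (phi_le_one hα (by omega) hkn)
            (hq (m + 1) (by omega))
      _ = q (m + 1) := mul_one _
  -- the representation of V as a nonnegative mixture
  have key : ∀ k n : ℕ, 1 ≤ k → k ≤ n →
      V n k = (∑' m : ℕ, q (m + 1) * phi α (m + 1) n k) + qinf * psi n k := by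
    intro k
    induction k with
    | zero => intro n h; omega
    | succ k ih =>
      intro n h1 hkn
      rcases Nat.eq_zero_or_pos k with hk0 | hk
      · subst hk0
        rw [hV1 n (by omega), hu n (by omega)]
        congr 1
        · apply tsum_congr
          intro m
          rw [phi_one, mul_one_div]
        · rcases eq_or_ne n 1 with h | h <;> simp [psi, h]
      · obtain ⟨n', rfl⟩ : ∃ n', n = n' + 1 := ⟨n - 1, by omega⟩
        have hkn' : k ≤ n' := by omega
        rw [hVrec n' k hk hkn', ih n' hk hkn', ih (n' + 1) hk (by omega)]
        have hs1 := hsummable n' k hkn'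
        have hs2 := hsummable (n' + 1) k (by omega)
        have hS3 : (∑' m : ℕ, q (m + 1) * phi α (m + 1) (n' + 1) (k + 1)) =
            (∑' m : ℕ, q (m + 1) * phi α (m + 1) n' k) -
            ((n' : ℝ) - α * k) * (∑' m : ℕ, q (m + 1) * phi α (m + 1) (n' + 1) k) := by
          rw [← tsum_mul_left, ← Summable.tsum_sub hs1 (hs2.mul_left _)]
          apply tsum_congr
          intro m
          rw [phi_rec hα (by omega : 1 ≤ m + 1) (by omega : 1 ≤ n') hk]
          ring
        rw [hS3, psi_rec (α := α) hkn']
        ring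
  intro n k hk hkn
  rw [key k n hk hkn]
  apply add_nonneg
  · apply tsum_nonneg
    intro m
    exact mul_nonneg (hq (m + 1) (by omega)) (phi_nonneg hα (by omega) n k)
  · apply mul_nonneg hqinf
    unfold psi
    split <;> norm_num
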